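/- Let X be a simplicial complex with vertex set decomposed as a disjoint union V(X) = Y ⊔ Z. Suppose there are two cohomology classes ξ₁ and ξ₂ on X (with coefficients in a ring) such that ξ₁⌣ξ₂ ≠ 0, and that ξ₁ restricted to the induced subcomplex ⟨Y⟩ is trivial. Then ξ₂ restricted to the induced subcomplex ⟨Z⟩ is not trivial. -/

import Mathlib

/-- An abstract simplicial complex on vertex type `V`: a downward-closed family of
nonempty finite sets of vertices containing all singletons. -/
structure SComplex (V : Type) where
  faces : Set (Finset V)
  nonempty_of_mem : ∀ s ∈ faces, s.Nonempty
  down_closed : ∀ s ∈ faces, ∀ t ⊆ s, t.Nonempty → t ∈ faces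
  singleton_mem : ∀ v : V, {v} ∈ faces

variable {V : Type} [DecidableEq V]

/-- The 1-skeleton of a simplicial complex, as a simple graph on the vertices. -/
def SComplex.graph (X : SComplex V) : SimpleGraph V where
  Adj u v := u ≠ v ∧ ({u, v} : Finset V) ∈ X.faces
  symm := ⟨fun u v h => ⟨h.1.symm, Finset.pair_comm u v ▸ h.2⟩⟩
  loopless := ⟨fun v h => h.1 rfl⟩

/-- Combinatorial (edge-path) homotopy rel endpoints between edge-walks in a simplicial
complex: the equivalence generated by removing backtracks and by replacing two sides
of a 2-face by the third side.  Two walks are edge-homotopic iff the corresponding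
paths in the geometric realization are homotopic rel endpoints. -/
inductive SComplex.EdgeHomotopic (X : SComplex V) :
    ∀ {u v : V}, X.graph.Walk u v → X.graph.Walk u v → Prop
  | refl {u v : V} (p : X.graph.Walk u v) : EdgeHomotopic X p p
  | symm {u v : V} {p q : X.graph.Walk u v} : EdgeHomotopic X p q → EdgeHomotopic X q p
  | trans {u v : V} {p q r : X.graph.Walk u v} :
      EdgeHomotopic X p q → EdgeHomotopic X q r → EdgeHomotopic X p r
  | cons {u v w : V} (h : X.graph.Adj u v) {p q : X.graph.Walk v w} :
      EdgeHomotopic X p q →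
      EdgeHomotopic X (SimpleGraph.Walk.cons h p) (SimpleGraph.Walk.cons h q)
  | backtrack {u v w : V} (h : X.graph.Adj u v) (p : X.graph.Walk u w) :
      EdgeHomotopic X (SimpleGraph.Walk.cons h (SimpleGraph.Walk.cons h.symm p)) p
  | triangle {u v w z : V} (huv : X.graph.Adj u v) (hvw : X.graph.Adj v w)
      (huw : X.graph.Adj u w) (hface : ({u, v, w} : Finset V) ∈ X.faces)
      (p : X.graph.Walk w z) :
      EdgeHomotopic X (SimpleGraph.Walk.cons huv (SimpleGraph.Walk.cons hvw p))
        (SimpleGraph.Walk.cons huw p)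

/-- A closed edge-path is null-homotopic if it is edge-homotopic to the constant path. -/
def SComplex.NullHomotopic (X : SComplex V) {x : V} (p : X.graph.Walk x x) : Prop :=
  X.EdgeHomotopic p SimpleGraph.Walk.nil

/-- The edge-path systole: the least length of a closed edge-path that is not
null-homotopic (so every closed edge-path of length `< sys X` is null-homotopic,
and `sys X` is the largest such integer); it is `+∞` if every closed edge-path
is null-homotopic (e.g. if `X` is simply connected). -/
noncomputable def SComplex.sys (X : SComplex V) : ℕ∞ :=
  sInf {n : ℕ∞ | ∃ (x : V) (p : X.graph.Walk x x), ¬ X.NullHomotopic p ∧ (p.length : ℕ∞) = n}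

/-- A set `Y` of vertices is inessential if every closed edge-path all of whose vertices
lie in `Y` (equivalently, every loop in a connected component of the induced subcomplex
`⟨Y⟩`) is null-homotopic in `X`;  this says exactly that for every connected component
`C` of `⟨Y⟩` and every connected component `D` of `X` the map `π₁(C) → π₁(D)` is trivial. -/
def SComplex.Inessential (X : SComplex V) (Y : Set V) : Prop :=
  ∀ (x : V) (p : X.graph.Walk x x), (∀ v ∈ p.support, v ∈ Y) → X.NullHomotopic p

/-- `X` is combinatorially `n`-essential if its vertex set cannot be partitioned into
`n` or fewer inessential sets. -/
def SComplex.CombEssential (X : SComplex V) (n : ℕ) : Prop :=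
  ¬ ∃ P : Fin n → Set V, (∀ v, ∃ i, v ∈ P i) ∧
      (∀ i j, i ≠ j → Disjoint (P i) (P j)) ∧ ∀ i, X.Inessential (P i)

/-- The combinatorial metric ball `B(x,i)`: vertices at edge-distance at most `i` from `x`. -/
def SComplex.ball (X : SComplex V) (x : V) (i : ℕ) : Set V :=
  {y | ∃ p : X.graph.Walk x y, p.length ≤ i}

/-- `r` is the homotopy triviality radius of `X`: every ball of radius `r` is
inessential, and `r` is the largest integer with this property. -/
def SComplex.HomotopyTrivRadius (X : SComplex V) (r : ℕ) : Prop :=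
  (∀ x, X.Inessential (X.ball x r)) ∧
    ∀ r' : ℕ, (∀ x, X.Inessential (X.ball x r')) → r' ≤ r

section Cochains

variable {R : Type} [CommRing R]

/-- An ordered simplex of `X`: a tuple of vertices spanning a face of `X`
(repetitions allowed, as in the ordered simplicial cochain complex, which computes the
cohomology of `X`). -/
def SComplex.IsOSimplex (X : SComplex V) {k : ℕ} (f : Fin k → V) : Prop :=
  Finset.image f Finset.univ ∈ X.faces

/-- The simplicial coboundary of a `k`-cochain, a `(k+1)`-cochain:
`(δc)(v₀,…,v_{k+1}) = ∑ⱼ (-1)ʲ c(v₀,…,v̂ⱼ,…,v_{k+1})`. -/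
def cobdry {k : ℕ} (c : (Fin (k + 1) → V) → R) (f : Fin (k + 2) → V) : R :=
  ∑ j : Fin (k + 2), (-1 : R) ^ (j : ℕ) * c fun i => f (j.succAbove i)

/-- `c` is a simplicial `k`-cocycle of `X`: its coboundary vanishes on all ordered
`(k+1)`-simplices of `X`. -/
def SComplex.IsCocycle (X : SComplex V) {k : ℕ} (c : (Fin (k + 1) → V) → R) : Prop :=
  ∀ f : Fin (k + 2) → V, X.IsOSimplex f → cobdry c f = 0

/-- The cohomology class of the `(k+1)`-cocycle `c` restricts trivially to the
subcomplex induced by the vertex set `S`: on ordered simplices with vertices in `S` it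
agrees with the coboundary of a `k`-cochain. -/
def SComplex.TrivialOn (X : SComplex V) {k : ℕ} (c : (Fin (k + 2) → V) → R)
    (S : Set V) : Prop :=
  ∃ b : (Fin (k + 1) → V) → R, ∀ f : Fin (k + 2) → V, X.IsOSimplex f →
    (∀ i, f i ∈ S) → c f = cobdry b f

/-- The Alexander–Whitney cup product of a `(p+1)`-cochain and a `(q+1)`-cochain: a
`(p+q+2)`-cochain given by `(c ⌣ d)(v₀,…,v_{p+q+2}) =
c(v₀,…,v_{p+1}) · d(v_{p+1},…,v_{p+q+2})`. -/
def cup {p q : ℕ} (c : (Fin (p + 2) → V) → R) (d : (Fin (q + 2) → V) → R)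
    (f : Fin (p + q + 3) → V) : R :=
  c (fun i => f (Fin.castLE (by omega) i)) * d fun i => f ⟨p + 1 + (i : ℕ), by omega⟩

end Cochains


namespace CupLS
variable {α β : Type*}

variable {α β : Type*}

lemma getElem_idx_congr (l : List α) {i j : ℕ} (h : i = j) (hi : i < l.length) :
    l[i] = l[j]'(h ▸ hi) := by subst h; rfl

lemma eraseIdx_eraseIdx (l : List α) : ∀ i j : ℕ, i ≤ j →
    (l.eraseIdx i).eraseIdx j = (l.eraseIdx (j+1)).eraseIdx i := by
  induction l with
  | nil => simp
  | cons a t ih =>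
    intro i j hij
    cases i with
    | zero => cases j <;> simp [List.eraseIdx]
    | succ i' =>
      cases j with
      | zero => omega
      | succ j' => simp [List.eraseIdx, ih i' j' (by omega)]

lemma eraseIdx_map (φ : α → β) (l : List α) : ∀ i : ℕ,
    (l.map φ).eraseIdx i = (l.eraseIdx i).map φ := by
  induction l with
  | nil => simp
  | cons a t ih => intro i; cases i <;> simp [List.eraseIdx, ih]

lemma take_eraseIdx_of_le (l : List α) {i m : ℕ} (hi : i ≤ m) (hl : m+2 ≤ l.length) :
    (l.eraseIdx i).take (m+1) = (l.take (m+2)).eraseIdx i := by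
  have hil : i < l.length := by omega
  have him : i < m + 2 := by omega
  apply List.ext_getElem
  · simp [List.length_eraseIdx, hil, him]; omega
  · intro n h1 h2
    rw [List.getElem_take, List.getElem_eraseIdx, List.getElem_eraseIdx]
    split
    · rw [List.getElem_take]
    · rw [List.getElem_take]

lemma drop_eraseIdx_of_le (l : List α) {i m : ℕ} (hi : i ≤ m) (hl : m+2 ≤ l.length) :
    (l.eraseIdx i).drop m = l.drop (m+1) := by
  have hil : i < l.length := by omega
  apply List.ext_getElem
  · simp [List.length_eraseIdx, hil]; omega
  · intro n h1 h2
    rw [List.getElem_drop, List.getElem_eraseIdx, dif_neg (by omega), List.getElem_drop]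
    exact getElem_idx_congr l (by omega) _

lemma take_eraseIdx_of_gt (l : List α) {i m : ℕ} (hi : m+1 ≤ i) :
    (l.eraseIdx i).take (m+1) = l.take (m+1) := by
  by_cases hil : i < l.length
  · apply List.ext_getElem
    · simp [List.length_eraseIdx, hil]; omega
    · intro n h1 h2
      have hn : n < m + 1 := by
        simp [List.length_eraseIdx, hil] at h1; omega
      rw [List.getElem_take, List.getElem_eraseIdx, dif_pos (by omega), List.getElem_take]
  · rw [List.eraseIdx_of_length_le (by omega)]

lemma drop_eraseIdx_of_ge (l : List α) {i m : ℕ} (hi : m ≤ i) (hil : i < l.length) :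
    (l.eraseIdx i).drop m = (l.drop m).eraseIdx (i - m) := by
  have him : i - m < l.length - m := by omega
  apply List.ext_getElem
  · simp [List.length_eraseIdx, hil, him]; omega
  · intro n h1 h2
    rw [List.getElem_drop, List.getElem_eraseIdx, List.getElem_eraseIdx]
    split
    · rw [dif_pos (by omega), List.getElem_drop]
    · rw [dif_neg (by omega), List.getElem_drop]
      exact getElem_idx_congr l (by omega) _

lemma eraseIdx_take_mid (l : List α) {m : ℕ} (hl : m+2 ≤ l.length) :
    (l.take (m+2)).eraseIdx (m+1) = l.take (m+1) := by
  have h1 : m + 1 < (l.take (m+2)).length := by simp [List.length_take]; omega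
  have hmin2 : min (m+2) l.length = m + 2 := Nat.min_eq_left hl
  have hmin1 : min (m+1) l.length = m + 1 := Nat.min_eq_left (by omega)
  apply List.ext_getElem
  · simp [List.length_eraseIdx, List.length_take, h1, hmin2, hmin1]
  · intro n hn1 hn2
    have hn : n < m + 1 := by simp [List.length_take] at hn2; omega
    rw [List.getElem_eraseIdx, dif_pos (by omega), List.getElem_take, List.getElem_take]

lemma eraseIdx_drop_zero (l : List α) {m : ℕ} :
    (l.drop m).eraseIdx 0 = l.drop (m+1) := by
  by_cases h : m < l.length
  · have h0 : 0 < (l.drop m).length := by simp; omega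
    apply List.ext_getElem
    · simp [List.length_eraseIdx, h0]
      all_goals omega
    · intro n h1 h2
      rw [List.getElem_eraseIdx, dif_neg (by omega), List.getElem_drop, List.getElem_drop]
      exact getElem_idx_congr l (by omega) _
  · rw [List.drop_eq_nil_of_le (by omega), List.drop_eq_nil_of_le (by omega)]
    rfl

lemma ofFn_comp_succAbove {n : ℕ} (f : Fin (n+1) → α) (j : Fin (n+1)) :
    List.ofFn (fun i => f (j.succAbove i)) = (List.ofFn f).eraseIdx j := by
  apply List.ext_getElem
  · simp [List.length_eraseIdx, j.isLt]
  · intro i h1 h2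
    rw [List.getElem_ofFn, List.getElem_eraseIdx]
    split
    · rw [List.getElem_ofFn]
      congr 1
      rw [Fin.succAbove, if_pos (by simp [Fin.lt_def]; omega)]
      rfl
    · rw [List.getElem_ofFn]
      congr 1
      rw [Fin.succAbove, if_neg (by simp [Fin.lt_def]; omega)]
      rfl

lemma toFinset_ofFn [DecidableEq α] {n : ℕ} (f : Fin n → α) :
    (List.ofFn f).toFinset = Finset.image f Finset.univ := by
  ext a
  simp [List.mem_ofFn, Set.mem_range, eq_comm]


variable {R : Type} [CommRing R]






def dL (C : List α → R) (l : List α) : R :=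
  ∑ i ∈ Finset.range l.length, (-1 : R)^i * C (l.eraseIdx i)

lemma dL_sub (C D : List α → R) (l : List α) :
    dL (fun l' => C l' - D l') l = dL C l - dL D l := by
  simp [dL, mul_sub, Finset.sum_sub_distrib]

lemma dL_smul (r : R) (C : List α → R) (l : List α) :
    dL (fun l' => r * C l') l = r * dL C l := by
  simp only [dL, Finset.mul_sum]
  exact Finset.sum_congr rfl fun i _ => by ring

lemma dL_add (C D : List α → R) (l : List α) :
    dL (fun l' => C l' + D l') l = dL C l + dL D l := by
  simp [dL, mul_add, Finset.sum_add_distrib]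

lemma dL_congr {C D : List α → R} (h : ∀ l', C l' = D l') (l : List α) :
    dL C l = dL D l := by
  simp [dL, h]

lemma dL_dL (C : List α → R) (l : List α) : dL (dL C) l = 0 := by
  set n := l.length with hn
  have hlen : ∀ i ∈ Finset.range n, (l.eraseIdx i).length = n - 1 := by
    intro i hi
    simp at hi
    simp [List.length_eraseIdx, hi, ← hn]
  rw [dL]
  have key : ∀ i ∈ Finset.range n, (-1:R)^i * dL C (l.eraseIdx i)
      = ∑ j ∈ Finset.range (n-1), (-1:R)^(i+j) * C ((l.eraseIdx i).eraseIdx j) := by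
    intro i hi
    rw [dL, hlen i hi, Finset.mul_sum]
    exact Finset.sum_congr rfl fun j _ => by rw [pow_add]; ring
  rw [Finset.sum_congr rfl key, ← Finset.sum_product']
  apply Finset.sum_involution
    (g := fun p _ => if p.2 < p.1 then (p.2, p.1 - 1) else (p.2 + 1, p.1))
  · rintro ⟨i, j⟩ hij
    simp only [Finset.mem_product, Finset.mem_range] at hij
    by_cases h : j < i
    · rw [if_pos h]
      have hcomm : (l.eraseIdx j).eraseIdx (i-1) = (l.eraseIdx i).eraseIdx j := by
        have := eraseIdx_eraseIdx l j (i-1) (by omega)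
        rw [this, show i - 1 + 1 = i from by omega]
      dsimp only
      rw [hcomm]
      obtain ⟨i', rfl⟩ : ∃ i', i = i' + 1 := ⟨i - 1, by omega⟩
      rw [show i' + 1 - 1 = i' from by omega, show i' + 1 + j = (j + i') + 1 from by omega,
        pow_succ]
      ring
    · rw [if_neg h]
      have hcomm : (l.eraseIdx i).eraseIdx j = (l.eraseIdx (j+1)).eraseIdx i :=
        eraseIdx_eraseIdx l i j (by omega)
      dsimp only
      rw [hcomm, show j + 1 + i = (i + j) + 1 from by omega, pow_succ]
      ring
  · rintro ⟨i, j⟩ hij _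
    simp only [Finset.mem_product, Finset.mem_range] at hij
    by_cases h : j < i <;> simp [h, Prod.ext_iff] <;> omega
  · rintro ⟨i, j⟩ hij
    simp only [Finset.mem_product, Finset.mem_range] at hij
    by_cases h : j < i
    · simp only [if_pos h]
      rw [if_neg (show ¬ (i - 1 < j) by omega)]
      simp [Prod.ext_iff]; omega
    · simp only [if_neg h]
      rw [if_pos (show i < j + 1 by omega)]
      simp [Prod.ext_iff]
  · rintro ⟨i, j⟩ hij
    simp only [Finset.mem_product, Finset.mem_range] at hij
    by_cases h : j < i <;> simp [h, Finset.mem_product, Finset.mem_range] <;> omega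

lemma dL_cons (C : List α → R) (a : α) (l : List α) :
    dL C (a :: l) = C l - dL (fun l' => C (a :: l')) l := by
  rw [dL, List.length_cons, Finset.sum_range_succ']
  simp only [List.eraseIdx_cons_succ, List.eraseIdx_cons_zero, pow_succ, pow_zero, one_mul]
  rw [dL]
  have h2 : ∀ x ∈ Finset.range l.length,
      (-1:R)^x * -1 * C (a :: l.eraseIdx x) = -((-1:R)^x * C (a :: l.eraseIdx x)) :=
    fun x _ => by ring
  rw [Finset.sum_congr rfl h2, Finset.sum_neg_distrib]
  ring

lemma dL_map (φ : β → α) (C : List α → R) (g : List β) :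
    dL C (g.map φ) = dL (fun g' => C (g'.map φ)) g := by
  simp [dL, eraseIdx_map]


variable [DecidableEq α]










/-- Dual (cochain-level) barycentric-subdivision operator. -/
def SdStar (C : List (Finset α) → R) : List α → R
  | [] => C []
  | a :: t =>
    ∑ i : Fin (a::t).length,
      (-1:R)^(i:ℕ) * SdStar (fun g => C ((a::t).toFinset :: g)) ((a::t).eraseIdx (i:ℕ))
termination_by l => l.length
decreasing_by
  have hi := i.isLt
  rw [List.length_eraseIdx, if_pos hi]
  simp only [List.length_cons] at hi ⊢
  omega

lemma SdStar_nil (C : List (Finset α) → R) : SdStar C ([] : List α) = C [] := by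
  rw [SdStar.eq_1]

lemma SdStar_cons (C : List (Finset α) → R) (a : α) (t : List α) :
    SdStar C (a::t) = ∑ i ∈ Finset.range (a::t).length,
      (-1:R)^i * SdStar (fun g => C ((a::t).toFinset :: g)) ((a::t).eraseIdx i) := by
  rw [SdStar.eq_2]
  exact Fin.sum_univ_eq_sum_range
    (fun i => (-1:R)^i * SdStar (fun g => C ((a::t).toFinset :: g)) ((a::t).eraseIdx i)) _

/-- Dual homotopy operator for `id ≃ (λ_φ ∘ Sd)`. -/
def DStar (φ : Finset α → α) (C : List α → R) : List α → R
  | [] => 0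
  | [_] => 0
  | a :: b :: t =>
    C (a :: a :: b :: t)
      - SdStar (fun g => C (a :: g.map φ)) (a :: b :: t)
      - ∑ i : Fin (a::b::t).length,
          (-1:R)^(i:ℕ) * DStar φ (fun l' => C (a :: l')) ((a::b::t).eraseIdx (i:ℕ))
termination_by l => l.length
decreasing_by
  have hi := i.isLt
  rw [List.length_eraseIdx, if_pos hi]
  simp only [List.length_cons] at hi ⊢
  omega

lemma DStar_nil (φ : Finset α → α) (C : List α → R) : DStar φ C ([] : List α) = 0 := by
  rw [DStar.eq_1]

lemma DStar_single (φ : Finset α → α) (C : List α → R) (a : α) : DStar φ C [a] = 0 := by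
  rw [DStar.eq_2]

lemma DStar_cons₂ (φ : Finset α → α) (C : List α → R) (a b : α) (t : List α) :
    DStar φ C (a :: b :: t) =
      C (a :: a :: b :: t)
      - SdStar (fun g => C (a :: g.map φ)) (a :: b :: t)
      - ∑ i ∈ Finset.range (a::b::t).length,
          (-1:R)^i * DStar φ (fun l' => C (a :: l')) ((a::b::t).eraseIdx i) := by
  rw [DStar.eq_3]
  rw [Fin.sum_univ_eq_sum_range
    (fun i => (-1:R)^i * DStar φ (fun l' => C (a :: l')) ((a::b::t).eraseIdx i)) _]

lemma SdStar_sub : ∀ (n : ℕ) (C D : List (Finset α) → R) (l : List α), l.length ≤ n →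
    SdStar (fun g => C g - D g) l = SdStar C l - SdStar D l := by
  intro n
  induction n with
  | zero =>
    intro C D l hl
    have hnil : l = [] := List.length_eq_zero_iff.mp (by omega)
    subst hnil
    simp [SdStar_nil]
  | succ n ih =>
    intro C D l hl
    cases l with
    | nil => simp [SdStar_nil]
    | cons a t =>
      rw [SdStar_cons, SdStar_cons, SdStar_cons, ← Finset.sum_sub_distrib]
      apply Finset.sum_congr rfl
      intro i hi
      simp only [Finset.mem_range] at hi
      rw [ih _ _ _ (by
        have hlen := List.length_eraseIdx (l := a::t) (i := i)
        rw [if_pos hi] at hlen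
        rw [hlen]
        simp only [List.length_cons] at hl ⊢
        omega)]
      ring

lemma DStar_sub (φ : Finset α → α) : ∀ (n : ℕ) (C D : List α → R) (l : List α), l.length ≤ n →
    DStar φ (fun l' => C l' - D l') l = DStar φ C l - DStar φ D l := by
  intro n
  induction n with
  | zero =>
    intro C D l hl
    have hnil : l = [] := List.length_eq_zero_iff.mp (by omega)
    subst hnil
    simp [DStar_nil]
  | succ n ih =>
    intro C D l hl
    match l with
    | [] => simp [DStar_nil]
    | [a] => simp [DStar_single]
    | a :: b :: t =>
      rw [DStar_cons₂, DStar_cons₂, DStar_cons₂]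
      have hsd : SdStar (fun g => C (a :: g.map φ) - D (a :: g.map φ)) (a::b::t)
          = SdStar (fun g => C (a :: g.map φ)) (a::b::t)
            - SdStar (fun g => D (a :: g.map φ)) (a::b::t) :=
        SdStar_sub (a::b::t).length _ _ _ le_rfl
      rw [hsd]
      have hsum : ∀ i ∈ Finset.range (a::b::t).length,
          (-1:R)^i * DStar φ (fun l' => C (a :: l') - D (a :: l')) ((a::b::t).eraseIdx i)
          = (-1:R)^i * DStar φ (fun l' => C (a :: l')) ((a::b::t).eraseIdx i)
            - (-1:R)^i * DStar φ (fun l' => D (a :: l')) ((a::b::t).eraseIdx i) := by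
        intro i hi
        simp only [Finset.mem_range] at hi
        rw [ih _ _ _ (by
          have hlen := List.length_eraseIdx (l := a::b::t) (i := i)
          rw [if_pos hi] at hlen
          rw [hlen]
          simp only [List.length_cons] at hl ⊢
          omega)]
        ring
      rw [Finset.sum_congr rfl hsum, Finset.sum_sub_distrib]
      ring


lemma toFinset_eraseIdx_subset (l : List α) (i : ℕ) :
    (l.eraseIdx i).toFinset ⊆ l.toFinset := by
  intro x hx
  rw [List.mem_toFinset] at hx ⊢
  exact (List.eraseIdx_sublist l i).subset hx

lemma length_eraseIdx_le {l : List α} {i n : ℕ} (hi : i < l.length) (hl : l.length ≤ n + 1) :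
    (l.eraseIdx i).length ≤ n := by
  rw [List.length_eraseIdx, if_pos hi]; omega

/-- `Sd^*` is a (dual) chain map. -/
lemma SdStar_dL_aux : ∀ (n : ℕ) (C : List (Finset α) → R) (l : List α), l.length ≤ n →
    SdStar (dL C) l = dL (SdStar C) l := by
  intro n
  induction n with
  | zero =>
    intro C l hl
    have hnil : l = [] := List.length_eq_zero_iff.mp (by omega)
    subst hnil
    rw [SdStar_nil]
    simp [dL]
  | succ n ih =>
    intro C l hl
    cases l with
    | nil =>
      rw [SdStar_nil]
      simp [dL]
    | cons a t =>
      rw [SdStar_cons]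
      have step : ∀ i ∈ Finset.range (a::t).length,
          (-1:R)^i * SdStar (fun g => dL C ((a::t).toFinset :: g)) ((a::t).eraseIdx i)
          = (-1:R)^i * SdStar C ((a::t).eraseIdx i)
            - (-1:R)^i * dL (SdStar (fun g => C ((a::t).toFinset :: g))) ((a::t).eraseIdx i) := by
        intro i hi
        simp only [Finset.mem_range] at hi
        have hfun : (fun g => dL C ((a::t).toFinset :: g))
            = fun g => C g - dL (fun g' => C ((a::t).toFinset :: g')) g :=
          funext fun g => dL_cons C _ g
        rw [hfun, SdStar_sub ((a::t).eraseIdx i).length _ _ _ le_rfl,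
          ih _ _ (length_eraseIdx_le hi hl)]
        ring
      rw [Finset.sum_congr rfl step, Finset.sum_sub_distrib]
      have hA : dL (SdStar C) (a::t)
          = ∑ i ∈ Finset.range (a::t).length, (-1:R)^i * SdStar C ((a::t).eraseIdx i) := by
        rw [dL]
      have hB := dL_dL (SdStar (fun g => C ((a::t).toFinset :: g))) (a::t)
      rw [dL] at hB
      rw [hA, hB, sub_zero]

/-- The homotopy identity `D^* δ + δ D^* = id - (λ_φ ∘ Sd)^*`. -/
lemma DStar_dL_aux (φ : Finset α → α) (hφ : ∀ s : Finset α, s.Nonempty → φ s ∈ s) :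
    ∀ (n : ℕ) (C : List α → R) (l : List α), l.length ≤ n →
    DStar φ (dL C) l = C l - SdStar (fun g => C (g.map φ)) l - dL (DStar φ C) l := by
  intro n
  induction n with
  | zero =>
    intro C l hl
    have hnil : l = [] := List.length_eq_zero_iff.mp (by omega)
    subst hnil
    rw [DStar_nil, SdStar_nil]
    simp [dL]
  | succ n ih =>
    intro C l hl
    match l with
    | [] =>
      rw [DStar_nil, SdStar_nil]
      simp [dL]
    | [a] =>
      rw [DStar_single]
      have hthis : φ ({a} : Finset α) = a := by
        have hmem := hφ {a} (Finset.singleton_nonempty a)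
        simpa using hmem
      have h1 : SdStar (fun g => C (g.map φ)) [a] = C [a] := by
        rw [SdStar_cons]
        simp only [List.length_cons, List.length_nil, zero_add, Finset.sum_range_one, pow_zero,
          one_mul, List.eraseIdx_cons_zero, List.eraseIdx_nil, SdStar_nil, List.map_cons,
          List.map_nil, List.toFinset_cons, List.toFinset_nil, LawfulSingleton.insert_empty_eq]
        rw [hthis]
      have h2 : dL (DStar φ C) [a] = 0 := by
        rw [dL]
        simp [DStar_nil]
      rw [h1, h2]
      ring
    | a :: b :: t =>
      rw [DStar_cons₂]
      have p1 : dL C (a :: a :: b :: t)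
          = C (a::b::t) - dL (fun l' => C (a :: l')) (a::b::t) := dL_cons C a _
      have p2 : SdStar (fun g => dL C (a :: g.map φ)) (a::b::t)
          = SdStar (fun g => C (g.map φ)) (a::b::t)
            - dL (SdStar (fun g => C (a :: g.map φ))) (a::b::t) := by
        have hfun : (fun g : List (Finset α) => dL C (a :: g.map φ))
            = fun g : List (Finset α) =>
                C (g.map φ) - dL (fun g' : List (Finset α) => C (a :: g'.map φ)) g := by
          funext g
          rw [dL_cons C a (g.map φ), dL_map]
        rw [hfun, SdStar_sub (a::b::t).length _ _ _ le_rfl,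
          SdStar_dL_aux (a::b::t).length _ _ le_rfl]
      have p3 : ∀ i ∈ Finset.range (a::b::t).length,
          (-1:R)^i * DStar φ (fun l' => dL C (a :: l')) ((a::b::t).eraseIdx i)
          = (-1:R)^i * DStar φ C ((a::b::t).eraseIdx i)
            - ((-1:R)^i * C (a :: (a::b::t).eraseIdx i)
              - (-1:R)^i * SdStar (fun g => C (a :: g.map φ)) ((a::b::t).eraseIdx i)
              - (-1:R)^i * dL (DStar φ (fun l' => C (a :: l'))) ((a::b::t).eraseIdx i)) := by
        intro i hi
        simp only [Finset.mem_range] at hi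
        have hfun : (fun l' => dL C (a :: l')) =
            fun l' => C l' - dL (fun l'' => C (a :: l'')) l' :=
          funext fun l' => dL_cons C a l'
        rw [hfun, DStar_sub φ ((a::b::t).eraseIdx i).length _ _ _ le_rfl,
          ih _ _ (length_eraseIdx_le hi hl)]
        have hcomp : (fun g : List (Finset α) => (fun l' => C (a :: l')) (g.map φ))
            = fun g : List (Finset α) => C (a :: g.map φ) := rfl
        rw [hcomp]
        ring
      rw [p1, p2, Finset.sum_congr rfl p3]
      rw [Finset.sum_sub_distrib, Finset.sum_sub_distrib, Finset.sum_sub_distrib]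
      have q1 : ∑ i ∈ Finset.range (a::b::t).length,
          (-1:R)^i * DStar φ C ((a::b::t).eraseIdx i) = dL (DStar φ C) (a::b::t) := by
        rw [dL]
      have q2 : ∑ i ∈ Finset.range (a::b::t).length,
          (-1:R)^i * C (a :: (a::b::t).eraseIdx i)
          = dL (fun l' => C (a :: l')) (a::b::t) := by
        rw [dL]
      have q3 : ∑ i ∈ Finset.range (a::b::t).length,
          (-1:R)^i * SdStar (fun g => C (a :: g.map φ)) ((a::b::t).eraseIdx i)
          = dL (SdStar (fun g => C (a :: g.map φ))) (a::b::t) := by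
        rw [dL]
      have q4 : ∑ i ∈ Finset.range (a::b::t).length,
          (-1:R)^i * dL (DStar φ (fun l' => C (a :: l'))) ((a::b::t).eraseIdx i) = 0 := by
        have := dL_dL (DStar φ (fun l' => C (a :: l'))) (a::b::t)
        rw [dL] at this
        exact this
      rw [q1, q2, q3, q4]
      ring

/-- Vanishing criterion for `Sd^*`: it only sees decreasing flags of nonempty faces. -/
lemma SdStar_vanish : ∀ (n : ℕ) (C : List (Finset α) → R) (l : List α), l.length ≤ n →
    (∀ g : List (Finset α), g.length = l.length →
      (∀ s ∈ g, s.Nonempty ∧ s ⊆ l.toFinset) →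
      List.Chain' (fun s u => u ⊆ s) g → C g = 0) →
    SdStar C l = 0 := by
  intro n
  induction n with
  | zero =>
    intro C l hl hC
    have hnil : l = [] := List.length_eq_zero_iff.mp (by omega)
    subst hnil
    rw [SdStar_nil]
    exact hC [] rfl (by simp) List.isChain_nil
  | succ n ih =>
    intro C l hl hC
    cases l with
    | nil =>
      rw [SdStar_nil]
      exact hC [] rfl (by simp) List.isChain_nil
    | cons a t =>
      rw [SdStar_cons]
      apply Finset.sum_eq_zero
      intro i hi
      simp only [Finset.mem_range] at hi
      rw [ih _ _ (length_eraseIdx_le hi hl)]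
      · ring
      · intro g hg hmem hchain
        apply hC ((a::t).toFinset :: g)
        · rw [List.length_cons, hg, List.length_eraseIdx, if_pos hi]
          simp
        · intro s hs
          rcases List.mem_cons.mp hs with h | h
          · subst h
            exact ⟨by rw [List.toFinset_nonempty_iff]; simp, subset_rfl⟩
          · obtain ⟨h1, h2⟩ := hmem s h
            exact ⟨h1, h2.trans (toFinset_eraseIdx_subset _ _)⟩
        · rw [List.Chain', List.isChain_cons]
          refine ⟨?_, hchain⟩
          intro y hy
          have hyg : y ∈ g := List.mem_of_mem_head? hy
          exact (hmem y hyg).2.trans (toFinset_eraseIdx_subset _ _)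

/-- Vanishing criterion for `D^*`: it is supported on lists carried by `l`. -/
lemma DStar_vanish (φ : Finset α → α) (hφ : ∀ s : Finset α, s.Nonempty → φ s ∈ s) :
    ∀ (n : ℕ) (C : List α → R) (l : List α), l.length ≤ n →
    (∀ l' : List α, l' ≠ [] → l'.toFinset ⊆ l.toFinset → C l' = 0) →
    DStar φ C l = 0 := by
  intro n
  induction n with
  | zero =>
    intro C l hl hC
    have hnil : l = [] := List.length_eq_zero_iff.mp (by omega)
    subst hnil
    rw [DStar_nil]
  | succ n ih =>
    intro C l hl hC
    match l with
    | [] => rw [DStar_nil]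
    | [a] => rw [DStar_single]
    | a :: b :: t =>
      rw [DStar_cons₂]
      have h1 : C (a :: a :: b :: t) = 0 := by
        apply hC _ (by simp)
        intro x hx
        simp only [List.toFinset_cons, Finset.mem_insert, List.mem_toFinset] at hx ⊢
        rcases hx with h | h
        · left; exact h
        · exact h
      have h2 : SdStar (fun g => C (a :: g.map φ)) (a::b::t) = 0 := by
        apply SdStar_vanish (a::b::t).length _ _ le_rfl
        intro g hg hmem hchain
        apply hC _ (by simp)
        intro x hx
        simp only [List.toFinset_cons, Finset.mem_insert, List.mem_toFinset] at hx
        rcases hx with h | h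
        · subst h; simp
        · rw [List.mem_map] at h
          obtain ⟨s, hs, rfl⟩ := h
          obtain ⟨hne, hsub⟩ := hmem s hs
          exact hsub (hφ s hne)
      have h3 : ∀ i ∈ Finset.range (a::b::t).length,
          (-1:R)^i * DStar φ (fun l' => C (a :: l')) ((a::b::t).eraseIdx i) = 0 := by
        intro i hi
        simp only [Finset.mem_range] at hi
        rw [ih _ _ (length_eraseIdx_le hi hl)]
        · ring
        · intro l' _ hsub
          apply hC _ (by simp)
          intro x hx
          simp only [List.toFinset_cons, Finset.mem_insert] at hx
          rcases hx with h | h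
          · subst h; simp
          · exact toFinset_eraseIdx_subset _ _ (hsub h)
      rw [h1, h2, Finset.sum_eq_zero h3]
      ring








/-- Evaluation of a `Fin`-cochain on lists of the right length. -/
def cEval (k : ℕ) (c : (Fin k → α) → R) (l : List α) : R :=
  if h : l.length = k then c (fun i => l.get (Fin.cast h.symm i)) else 0

lemma cEval_ofFn (k : ℕ) (c : (Fin k → α) → R) (f : Fin k → α) :
    cEval k c (List.ofFn f) = c f := by
  rw [cEval, dif_pos (List.length_ofFn (f := f))]
  congr 1
  funext i
  simp [List.get_ofFn]

lemma cEval_of_ne (k : ℕ) (c : (Fin k → α) → R) {l : List α} (h : l.length ≠ k) :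
    cEval k c l = 0 := dif_neg h

lemma eq_ofFn_get (l : List α) {k : ℕ} (h : l.length = k) :
    l = List.ofFn (fun i : Fin k => l.get (Fin.cast h.symm i)) := by
  subst h
  simp [List.ofFn_get]

/-- The Leibniz rule for the cup product of list cochains. -/
lemma dL_cup (a b : List α → R) (m : ℕ) (l : List α) (hl : m+2 ≤ l.length) :
    dL (fun l' => a (l'.take (m+1)) * b (l'.drop m)) l
    = dL a (l.take (m+2)) * b (l.drop (m+1))
      + (-1:R)^m * (a (l.take (m+1)) * dL b (l.drop m)) := by
  have hntake : (l.take (m+2)).length = m+2 := by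
    rw [List.length_take]; omega
  have hndrop : (l.drop m).length = l.length - m := by
    rw [List.length_drop]
  -- left side split
  rw [dL, Finset.range_eq_Ico, ← Finset.sum_Ico_consecutive _ (Nat.zero_le (m+1)) (by omega),
    ← Finset.range_eq_Ico]
  have hS1 : ∑ i ∈ Finset.range (m+1),
      (-1:R)^i * (a ((l.eraseIdx i).take (m+1)) * b ((l.eraseIdx i).drop m))
      = (∑ i ∈ Finset.range (m+1), (-1:R)^i * a ((l.take (m+2)).eraseIdx i))
          * b (l.drop (m+1)) := by
    rw [Finset.sum_mul]
    apply Finset.sum_congr rfl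
    intro i hi
    simp only [Finset.mem_range] at hi
    rw [take_eraseIdx_of_le l (by omega) hl, drop_eraseIdx_of_le l (by omega) hl]
    ring
  have hS2 : ∑ i ∈ Finset.Ico (m+1) l.length,
      (-1:R)^i * (a ((l.eraseIdx i).take (m+1)) * b ((l.eraseIdx i).drop m))
      = ∑ j ∈ Finset.range (l.length - (m+1)),
          (-1:R)^(m+1+j) * (a (l.take (m+1)) * b ((l.drop m).eraseIdx (j+1))) := by
    rw [Finset.sum_Ico_eq_sum_range]
    apply Finset.sum_congr rfl
    intro j hj
    simp only [Finset.mem_range] at hj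
    rw [take_eraseIdx_of_gt l (by omega), drop_eraseIdx_of_ge l (by omega) (by omega),
      show m + 1 + j - m = j + 1 from by omega]
  rw [hS1, hS2]
  -- right side pieces
  have hR1 : dL a (l.take (m+2))
      = (∑ i ∈ Finset.range (m+1), (-1:R)^i * a ((l.take (m+2)).eraseIdx i))
        + (-1:R)^(m+1) * a (l.take (m+1)) := by
    rw [dL, hntake, Finset.sum_range_succ, eraseIdx_take_mid l hl]
  have hR2 : dL b (l.drop m)
      = b (l.drop (m+1)) + ∑ j ∈ Finset.range (l.length - (m+1)),
          (-1:R)^(j+1) * b ((l.drop m).eraseIdx (j+1)) := by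
    rw [dL, hndrop, show l.length - m = (l.length - (m+1)) + 1 from by omega,
      Finset.sum_range_succ', eraseIdx_drop_zero]
    simp only [pow_zero, one_mul]
    ring
  rw [hR1, hR2]
  have hsum2 : ∑ j ∈ Finset.range (l.length - (m+1)),
      (-1:R)^(m+1+j) * (a (l.take (m+1)) * b ((l.drop m).eraseIdx (j+1)))
      = (-1:R)^m * (a (l.take (m+1)) * ∑ j ∈ Finset.range (l.length - (m+1)),
          (-1:R)^(j+1) * b ((l.drop m).eraseIdx (j+1))) := by
    rw [Finset.mul_sum, Finset.mul_sum]
    apply Finset.sum_congr rfl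
    intro j hj
    rw [show m+1+j = m + (j+1) from by omega, pow_add]
    ring
  rw [hsum2]
  ring


lemma ne_nil_of_len {l : List α} (h : 0 < l.length) : l ≠ [] :=
  List.length_pos_iff.mp h

omit [DecidableEq α] in
lemma toFinset_take_subset [DecidableEq α] (l : List α) (k : ℕ) :
    (l.take k).toFinset ⊆ l.toFinset := by
  intro x hx
  rw [List.mem_toFinset] at hx ⊢
  exact (List.take_sublist k l).subset hx

omit [DecidableEq α] in
lemma toFinset_drop_subset [DecidableEq α] (l : List α) (k : ℕ) :
    (l.drop k).toFinset ⊆ l.toFinset := by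
  intro x hx
  rw [List.mem_toFinset] at hx ⊢
  exact (List.drop_sublist k l).subset hx

omit [DecidableEq α] in
lemma dL_len_support (e : List α → R) (k : ℕ)
    (hlen : ∀ l' : List α, l'.length ≠ k → e l' = 0) :
    ∀ l : List α, l.length ≠ k+1 → dL e l = 0 := by
  intro l h
  rw [dL]
  apply Finset.sum_eq_zero
  intro i hi
  simp only [Finset.mem_range] at hi
  rw [hlen _ (by rw [List.length_eraseIdx, if_pos hi]; omega)]
  ring

end CupLS
namespace CupLS

section Bridges
variable {V : Type} [DecidableEq V] {R : Type} [CommRing R]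

lemma cobdry_eq_dL {k : ℕ} (b : (Fin (k+1) → V) → R) (f : Fin (k+2) → V) :
    cobdry b f = dL (cEval (k+1) b) (List.ofFn f) := by
  rw [cobdry, dL, List.length_ofFn,
    ← Fin.sum_univ_eq_sum_range
      (fun i => (-1:R)^i * cEval (k+1) b ((List.ofFn f).eraseIdx i)) (k+2)]
  apply Finset.sum_congr rfl
  intro j _
  rw [← ofFn_comp_succAbove f j, cEval_ofFn]

lemma cocycle_dL (X : SComplex V) {k : ℕ} (c : (Fin (k+1) → V) → R) (hc : X.IsCocycle c)
    (l : List V) (hne : l ≠ []) (hfl : l.toFinset ∈ X.faces) :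
    dL (cEval (k+1) c) l = 0 := by
  by_cases hlen : l.length = k+2
  · have hofn := eq_ofFn_get l hlen
    rw [hofn, ← cobdry_eq_dL]
    apply hc
    rw [SComplex.IsOSimplex, ← toFinset_ofFn, ← hofn]
    exact hfl
  · rw [dL]
    apply Finset.sum_eq_zero
    intro i hi
    simp only [Finset.mem_range] at hi
    rw [cEval_of_ne _ _ (by rw [List.length_eraseIdx, if_pos hi]; omega)]
    ring

lemma trivial_to_list (X : SComplex V) (S : Set V) {k : ℕ}
    (c : (Fin (k+2) → V) → R) (b : (Fin (k+1) → V) → R)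
    (hb : ∀ f : Fin (k+2) → V, X.IsOSimplex f → (∀ i, f i ∈ S) → c f = cobdry b f) :
    ∀ l : List V, l.toFinset ∈ X.faces → (∀ x ∈ l, x ∈ S) →
      cEval (k+2) c l - dL (cEval (k+1) b) l = 0 := by
  intro l hfl hvS
  by_cases hlen : l.length = k+2
  · have hofn := eq_ofFn_get l hlen
    have hsimplex : X.IsOSimplex (fun i : Fin (k+2) => l.get (Fin.cast hlen.symm i)) := by
      rw [SComplex.IsOSimplex, ← toFinset_ofFn, ← hofn]
      exact hfl
    have hinS : ∀ i, (fun i : Fin (k+2) => l.get (Fin.cast hlen.symm i)) i ∈ S := by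
      intro i
      show l.get (Fin.cast hlen.symm i) ∈ S
      exact hvS _ (List.get_mem l _)
    rw [hofn, cEval_ofFn, ← cobdry_eq_dL, hb _ hsimplex hinS]
    ring
  · rw [cEval_of_ne _ _ hlen,
      dL_len_support (cEval (k+1) b) (k+1) (fun l' h => cEval_of_ne _ _ h) l (by omega)]
    ring

lemma faces_of_subset (X : SComplex V) {l l' : List V} (hf : l.toFinset ∈ X.faces)
    (hne : l' ≠ []) (hsub : l'.toFinset ⊆ l.toFinset) : l'.toFinset ∈ X.faces :=
  X.down_closed _ hf _ hsub ((List.toFinset_nonempty_iff l').mpr hne)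

lemma cup_cocycle (X : SComplex V) (a b : List V → R) (p q : ℕ)
    (halen : ∀ l : List V, l.length ≠ p+2 → a l = 0)
    (hblen : ∀ l : List V, l.length ≠ q+2 → b l = 0)
    (hacoc : ∀ l : List V, l ≠ [] → l.toFinset ∈ X.faces → dL a l = 0)
    (hbcoc : ∀ l : List V, l ≠ [] → l.toFinset ∈ X.faces → dL b l = 0) :
    ∀ l : List V, l ≠ [] → l.toFinset ∈ X.faces →
      dL (fun l' => a (l'.take (p+2)) * b (l'.drop (p+1))) l = 0 := by
  intro l hne hfl
  by_cases hlen : l.length = p+q+4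
  · have h : dL (fun l' => a (l'.take (p+2)) * b (l'.drop (p+1))) l
        = dL a (l.take (p+3)) * b (l.drop (p+2))
          + (-1:R)^(p+1) * (a (l.take (p+2)) * dL b (l.drop (p+1))) :=
      dL_cup a b (p+1) l (by omega)
    rw [h]
    rw [hacoc (l.take (p+3)) (ne_nil_of_len (by rw [List.length_take]; omega))
        (faces_of_subset X hfl (ne_nil_of_len (by rw [List.length_take]; omega))
          (toFinset_take_subset l _)),
      hbcoc (l.drop (p+1)) (ne_nil_of_len (by rw [List.length_drop]; omega))
        (faces_of_subset X hfl (ne_nil_of_len (by rw [List.length_drop]; omega))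
          (toFinset_drop_subset l _))]
    ring
  · rw [dL]
    apply Finset.sum_eq_zero
    intro i hi
    simp only [Finset.mem_range] at hi
    by_cases hsm : (l.eraseIdx i).length < p+2
    · rw [halen _ (by rw [List.length_take, List.length_eraseIdx, if_pos hi] at *; omega)]
      ring
    · rw [hblen _ (by rw [List.length_drop, List.length_eraseIdx, if_pos hi] at *; omega)]
      ring

lemma homotopy_step (φ : Finset V → V) (hφ : ∀ s : Finset V, s.Nonempty → φ s ∈ s)
    (C : List V → R) (L : List V)
    (hcoc : ∀ l' : List V, l' ≠ [] → l'.toFinset ⊆ L.toFinset → dL C l' = 0)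
    (hkey : ∀ g : List (Finset V), g.length = L.length →
      (∀ s ∈ g, s.Nonempty ∧ s ⊆ L.toFinset) →
      List.Chain' (fun s u => u ⊆ s) g → C (g.map φ) = 0) :
    C L = dL (DStar φ C) L := by
  have h := DStar_dL_aux φ hφ L.length C L le_rfl
  rw [DStar_vanish φ hφ L.length (dL C) L le_rfl hcoc] at h
  rw [SdStar_vanish L.length (fun g => C (g.map φ)) L le_rfl hkey] at h
  linear_combination -h

lemma key_vanish (X : SComplex V) (Y Z : Set V) (hcover : Y ∪ Z = Set.univ)
    (φ : Finset V → V) (hφmem : ∀ s : Finset V, s.Nonempty → φ s ∈ s)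
    (hφY : ∀ s : Finset V, (∃ y, y ∈ s ∧ y ∈ Y) → φ s ∈ Y)
    (p q : ℕ) (χ ψ : List V → R)
    (hχ0 : ∀ l : List V, l.toFinset ∈ X.faces → (∀ v ∈ l, v ∈ Y) → χ l = 0)
    (hψ0 : ∀ l : List V, l.toFinset ∈ X.faces → (∀ v ∈ l, v ∈ Z) → ψ l = 0)
    (Tf : Finset V) (hTf : Tf ∈ X.faces)
    (g : List (Finset V)) (hg : g.length = p+q+3)
    (hmem : ∀ s ∈ g, s.Nonempty ∧ s ⊆ Tf)
    (hchain : List.Chain' (fun s u => u ⊆ s) g) :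
    χ ((g.map φ).take (p+2)) * ψ ((g.map φ).drop (p+1)) = 0 := by
  haveI : IsTrans (Finset V) (fun s u : Finset V => u ⊆ s) :=
    ⟨fun a b c h1 h2 => h2.trans h1⟩
  have hpair := List.isChain_iff_pairwise.mp hchain
  rw [List.pairwise_iff_getElem] at hpair
  have hplt : p+1 < g.length := by omega
  have hsubm : ∀ (i : ℕ) (hi : i < g.length), i ≤ p+1 → g[p+1] ⊆ g[i] := by
    intro i hi hle
    rcases Nat.lt_or_ge i (p+1) with h | h
    · exact hpair i (p+1) hi hplt h
    · have : i = p+1 := by omega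
      subst this
      exact subset_rfl
  have hsupm : ∀ (j : ℕ) (hj : j < g.length), p+1 ≤ j → g[j] ⊆ g[p+1] := by
    intro j hj hle
    rcases Nat.lt_or_ge (p+1) j with h | h
    · exact hpair (p+1) j hplt hj h
    · have : j = p+1 := by omega
      subst this
      exact subset_rfl
  by_cases hY' : ∃ y, y ∈ g[p+1] ∧ y ∈ Y
  · rw [← List.map_take]
    rw [hχ0 ((g.take (p+2)).map φ) ?_ ?_, zero_mul]
    · apply X.down_closed _ hTf
      · intro x hx
        rw [List.mem_toFinset, List.mem_map] at hx
        obtain ⟨s, hs, rfl⟩ := hx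
        have hsg : s ∈ g := (List.take_sublist _ _).subset hs
        exact (hmem s hsg).2 (hφmem s (hmem s hsg).1)
      · rw [List.toFinset_nonempty_iff]
        apply ne_nil_of_len
        rw [List.length_map, List.length_take]
        omega
    · intro v hv
      rw [List.mem_map] at hv
      obtain ⟨s, hs, rfl⟩ := hv
      rw [List.mem_iff_getElem] at hs
      obtain ⟨i, hilt, rfl⟩ := hs
      have hig : i < g.length := by
        rw [List.length_take] at hilt
        omega
      have hil : i ≤ p+1 := by
        rw [List.length_take] at hilt
        omega
      rw [List.getElem_take]
      apply hφY
      obtain ⟨y, hy1, hy2⟩ := hY'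
      exact ⟨y, hsubm i hig hil hy1, hy2⟩
  · have hzs : ∀ x ∈ g[p+1], x ∈ Z := by
      intro x hx
      have hxu : x ∈ Y ∪ Z := by rw [hcover]; trivial
      rcases hxu with h | h
      · exact absurd ⟨x, hx, h⟩ hY'
      · exact h
    rw [← List.map_drop]
    rw [hψ0 ((g.drop (p+1)).map φ) ?_ ?_, mul_zero]
    · apply X.down_closed _ hTf
      · intro x hx
        rw [List.mem_toFinset, List.mem_map] at hx
        obtain ⟨s, hs, rfl⟩ := hx
        have hsg : s ∈ g := (List.drop_sublist _ _).subset hs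
        exact (hmem s hsg).2 (hφmem s (hmem s hsg).1)
      · rw [List.toFinset_nonempty_iff]
        apply ne_nil_of_len
        rw [List.length_map, List.length_drop]
        omega
    · intro v hv
      rw [List.mem_map] at hv
      obtain ⟨s, hs, rfl⟩ := hv
      rw [List.mem_iff_getElem] at hs
      obtain ⟨j, hjlt, rfl⟩ := hs
      have hjg : p+1+j < g.length := by
        rw [List.length_drop] at hjlt
        omega
      rw [List.getElem_drop]
      apply hzs
      apply hsupm (p+1+j) hjg (by omega)
      exact hφmem _ (hmem _ (List.getElem_mem hjg)).1

end Bridges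
end CupLS

namespace CupLS
section Assemble
variable {V : Type} [DecidableEq V] {R : Type} [CommRing R]

lemma cup_cohom_left (u χe v e : List V → R) (p : ℕ) (L : List V)
    (hdiff : ∀ l', u l' - χe l' = dL e l')
    (hvc : dL v (L.drop p) = 0) (hL : p+2 ≤ L.length) :
    u (L.take (p+2)) * v (L.drop (p+1)) - χe (L.take (p+2)) * v (L.drop (p+1))
      = dL (fun l' => e (l'.take (p+1)) * v (l'.drop p)) L := by
  rw [dL_cup e v p L hL, hvc, ← hdiff (L.take (p+2))]
  ring

lemma cup_cohom_right (χe v ψe e : List V → R) (p : ℕ) (L : List V)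
    (hdiff : ∀ l', v l' - ψe l' = dL e l')
    (hχc : dL χe (L.take (p+3)) = 0) (hL : p+3 ≤ L.length) :
    χe (L.take (p+2)) * v (L.drop (p+1)) - χe (L.take (p+2)) * ψe (L.drop (p+1))
      = dL (fun l' => (-1:R)^(p+1)
          * ((fun l'' : List V => χe (l''.take (p+2)) * e (l''.drop (p+1))) l')) L := by
  have h : dL (fun l'' : List V => χe (l''.take (p+2)) * e (l''.drop (p+1))) L
      = dL χe (L.take (p+3)) * e (L.drop (p+2))
        + (-1:R)^(p+1) * (χe (L.take (p+2)) * dL e (L.drop (p+1))) :=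
    dL_cup χe e (p+1) L (by omega)
  rw [dL_smul ((-1:R)^(p+1)) (fun l'' : List V => χe (l''.take (p+2)) * e (l''.drop (p+1))) L,
    h, hχc, ← hdiff (L.drop (p+1))]
  have hsq : (-1:R)^(p+1) * (-1:R)^(p+1) = 1 := by
    rw [← pow_add]
    exact Even.neg_one_pow ⟨p+1, by ring⟩
  linear_combination (χe (L.take (p+2)) * ψe (L.drop (p+1))
    - χe (L.take (p+2)) * v (L.drop (p+1))) * hsq

lemma assemble (X : SComplex V) (Y Z : Set V) (hcover : Y ∪ Z = Set.univ)
    (φ : Finset V → V) (hφmem : ∀ s : Finset V, s.Nonempty → φ s ∈ s)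
    (hφY : ∀ s : Finset V, (∃ y, y ∈ s ∧ y ∈ Y) → φ s ∈ Y) (p q : ℕ)
    (u eY v eZ : List V → R)
    (hulen : ∀ l : List V, l.length ≠ p+2 → u l = 0)
    (heYlen : ∀ l : List V, l.length ≠ p+1 → eY l = 0)
    (hvlen : ∀ l : List V, l.length ≠ q+2 → v l = 0)
    (heZlen : ∀ l : List V, l.length ≠ q+1 → eZ l = 0)
    (hucoc : ∀ l : List V, l ≠ [] → l.toFinset ∈ X.faces → dL u l = 0)
    (hvcoc : ∀ l : List V, l ≠ [] → l.toFinset ∈ X.faces → dL v l = 0)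
    (huY : ∀ l : List V, l.toFinset ∈ X.faces → (∀ x ∈ l, x ∈ Y) → u l - dL eY l = 0)
    (hvZ : ∀ l : List V, l.toFinset ∈ X.faces → (∀ x ∈ l, x ∈ Z) → v l - dL eZ l = 0) :
    ∃ E : List V → R, ∀ L : List V, L ≠ [] → L.toFinset ∈ X.faces → L.length = p+q+3 →
      u (L.take (p+2)) * v (L.drop (p+1)) = dL E L := by
  refine ⟨(fun l' : List V => (fun l' : List V => eY (l'.take (p+1)) * v (l'.drop p)) l' + (fun l'' : List V => (fun l' : List V => (-1:R)^(p+1) * ((fun l'' : List V => (fun l : List V => u l - dL eY l) (l''.take (p+2)) * eZ (l''.drop (p+1))) l')) l'' + (DStar φ (fun l' : List V => (fun l : List V => u l - dL eY l) (l'.take (p+2)) * (fun l : List V => v l - dL eZ l) (l'.drop (p+1)))) l'') l'), ?_⟩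
  intro L hLne hLT hLlen
  have hχlen : ∀ l : List V, l.length ≠ p+2 → u l - dL eY l = 0 := by
    intro l h
    rw [hulen l h, dL_len_support eY (p+1) heYlen l (by omega)]
    ring
  have hψlen : ∀ l : List V, l.length ≠ q+2 → v l - dL eZ l = 0 := by
    intro l h
    rw [hvlen l h, dL_len_support eZ (q+1) heZlen l (by omega)]
    ring
  have hχcoc : ∀ l : List V, l ≠ [] → l.toFinset ∈ X.faces → dL (fun l : List V => u l - dL eY l) l = 0 := by
    intro l hne hfl
    rw [dL_sub, dL_dL, hucoc l hne hfl]
    ring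
  have hψcoc : ∀ l : List V, l ≠ [] → l.toFinset ∈ X.faces → dL (fun l : List V => v l - dL eZ l) l = 0 := by
    intro l hne hfl
    rw [dL_sub, dL_dL, hvcoc l hne hfl]
    ring
  have hcupcoc := cup_cocycle X (fun l : List V => u l - dL eY l) (fun l : List V => v l - dL eZ l) p q hχlen hψlen hχcoc hψcoc
  have hdroplen : (q:ℕ)+3 = L.length - p := by omega
  have h1 : u (L.take (p+2)) * v (L.drop (p+1))
      - (u (L.take (p+2)) - dL eY (L.take (p+2))) * v (L.drop (p+1)) = dL (fun l' : List V => eY (l'.take (p+1)) * v (l'.drop p)) L := by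
    have := cup_cohom_left u (fun l : List V => u l - dL eY l) v eY p L
      (fun l' => by show u l' - (u l' - dL eY l') = dL eY l'; ring)
      (hvcoc (L.drop p) (ne_nil_of_len (by rw [List.length_drop]; omega))
        (faces_of_subset X hLT (ne_nil_of_len (by rw [List.length_drop]; omega))
          (toFinset_drop_subset L p)))
      (by omega)
    exact this
  have h2 : (u (L.take (p+2)) - dL eY (L.take (p+2))) * v (L.drop (p+1))
      - (u (L.take (p+2)) - dL eY (L.take (p+2)))
        * (v (L.drop (p+1)) - dL eZ (L.drop (p+1))) = dL (fun l' : List V => (-1:R)^(p+1) * ((fun l'' : List V => (fun l : List V => u l - dL eY l) (l''.take (p+2)) * eZ (l''.drop (p+1))) l')) L := by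
    have := cup_cohom_right (fun l : List V => u l - dL eY l) v (fun l : List V => v l - dL eZ l) eZ p L
      (fun l' => by show v l' - (v l' - dL eZ l') = dL eZ l'; ring)
      (hχcoc (L.take (p+3)) (ne_nil_of_len (by rw [List.length_take]; omega))
        (faces_of_subset X hLT (ne_nil_of_len (by rw [List.length_take]; omega))
          (toFinset_take_subset L (p+3))))
      (by omega)
    exact this
  have h3 : (u (L.take (p+2)) - dL eY (L.take (p+2)))
      * (v (L.drop (p+1)) - dL eZ (L.drop (p+1))) = dL (DStar φ (fun l' : List V => (fun l : List V => u l - dL eY l) (l'.take (p+2)) * (fun l : List V => v l - dL eZ l) (l'.drop (p+1)))) L := by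
    have := homotopy_step φ hφmem (fun l' : List V => (fun l : List V => u l - dL eY l) (l'.take (p+2)) * (fun l : List V => v l - dL eZ l) (l'.drop (p+1))) L
      (fun l' hne hsub => hcupcoc l' hne (faces_of_subset X hLT hne hsub))
      (fun g hg hmem hchain =>
        key_vanish X Y Z hcover φ hφmem hφY p q (fun l : List V => u l - dL eY l) (fun l : List V => v l - dL eZ l) huY hvZ
          L.toFinset hLT g (by rw [hg, hLlen]) hmem hchain)
    exact this
  have hadd1 : dL (fun l' : List V => (fun l' : List V => eY (l'.take (p+1)) * v (l'.drop p)) l' + (fun l'' : List V => (fun l' : List V => (-1:R)^(p+1) * ((fun l'' : List V => (fun l : List V => u l - dL eY l) (l''.take (p+2)) * eZ (l''.drop (p+1))) l')) l'' + (DStar φ (fun l' : List V => (fun l : List V => u l - dL eY l) (l'.take (p+2)) * (fun l : List V => v l - dL eZ l) (l'.drop (p+1)))) l'') l') L = dL (fun l' : List V => eY (l'.take (p+1)) * v (l'.drop p)) L + dL (fun l'' : List V => (fun l' : List V => (-1:R)^(p+1) * ((fun l'' : List V => (fun l : List V => u l - dL eY l) (l''.take (p+2)) * eZ (l''.drop (p+1)))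 l')) l'' + (DStar φ (fun l' : List V => (fun l : List V => u l - dL eY l) (l'.take (p+2)) * (fun l : List V => v l - dL eZ l) (l'.drop (p+1)))) l'') L := dL_add (fun l' : List V => eY (l'.take (p+1)) * v (l'.drop p)) (fun l'' : List V => (fun l' : List V => (-1:R)^(p+1) * ((fun l'' : List V => (fun l : List V => u l - dL eY l) (l''.take (p+2)) * eZ (l''.drop (p+1))) l')) l'' + (DStar φ (fun l' : List V => (fun l : List V => u l - dL eY l) (l'.take (p+2)) * (fun l : List V => v l - dL eZ l) (l'.drop (p+1)))) l'') L
  have hadd2 : dL (fun l'' : List V => (fun l' : List V => (-1:R)^(p+1) * ((fun l'' : List V => (fun l : List V => u l - dL eY l) (l''.take (p+2)) * eZ (l''.drop (p+1))) l')) l'' + (DStar φ (fun l' : List V => (fun l : List V => u l - dL eY l) (l'.take (p+2)) * (fun l : List V => v l - dL eZ l) (l'.drop (p+1)))) l'') L = dL (fun l' : List V => (-1:R)^(p+1) * ((fun l'' : List V => (fun l : List V => u l - dL eY l) (l''.take (p+2)) * eZ (l''.drop (p+1))) l')) L + dL (DStar φ (fun l' : List V => (fun l : List V => u l - dL eY l)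 (l'.take (p+2)) * (fun l : List V => v l - dL eZ l) (l'.drop (p+1)))) L := dL_add (fun l' : List V => (-1:R)^(p+1) * ((fun l'' : List V => (fun l : List V => u l - dL eY l) (l''.take (p+2)) * eZ (l''.drop (p+1))) l')) (DStar φ (fun l' : List V => (fun l : List V => u l - dL eY l) (l'.take (p+2)) * (fun l : List V => v l - dL eZ l) (l'.drop (p+1)))) L
  linear_combination h1 + h2 + h3 - hadd1 - hadd2

lemma cup_eq_front_back {p q : ℕ} (c : (Fin (p+2) → V) → R) (d : (Fin (q+2) → V) → R)
    (f : Fin (p+q+3) → V) :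
    cup c d f
      = cEval (p+2) c ((List.ofFn f).take (p+2))
        * cEval (q+2) d ((List.ofFn f).drop (p+1)) := by
  have ht : (List.ofFn f).take (p+2)
      = List.ofFn (fun i : Fin (p+2) => f (Fin.castLE (by omega) i)) := by
    apply List.ext_getElem
    · rw [List.length_take, List.length_ofFn, List.length_ofFn]
      omega
    · intro n h1 h2
      rw [List.getElem_take, List.getElem_ofFn, List.getElem_ofFn]
      rfl
  have hd2 : (List.ofFn f).drop (p+1)
      = List.ofFn (fun i : Fin (q+2) => f ⟨p+1+(i:ℕ), by omega⟩) := by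
    apply List.ext_getElem
    · rw [List.length_drop, List.length_ofFn, List.length_ofFn]
      omega
    · intro n h1 h2
      rw [List.getElem_drop, List.getElem_ofFn, List.getElem_ofFn]
  rw [ht, hd2, cEval_ofFn, cEval_ofFn]
  rfl

end Assemble
end CupLS

theorem cup_lemma_LS {V : Type} [Fintype V] [DecidableEq V] (X : SComplex V)
    {R : Type} [CommRing R] (Y Z : Set V) (hcover : Y ∪ Z = Set.univ)
    (hdisj : Disjoint Y Z) (p q : ℕ)
    (c : (Fin (p + 2) → V) → R) (d : (Fin (q + 2) → V) → R)
    (hc : X.IsCocycle c) (hd : X.IsCocycle d)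
    (hcup : ¬ X.TrivialOn (cup c d) Set.univ)
    (hY : X.TrivialOn c Y) :
    ¬ X.TrivialOn d Z := by
  classical
  intro hdZ
  by_cases hV : Nonempty V
  swap
  · exact hcup ⟨fun _ => 0, fun f _ _ => absurd ⟨f 0⟩ hV⟩
  obtain ⟨bY, hbY⟩ := hY
  obtain ⟨bZ, hbZ⟩ := hdZ
  obtain ⟨v₀⟩ := hV
  have hφex : ∃ φ : Finset V → V, (∀ s : Finset V, s.Nonempty → φ s ∈ s) ∧
      ∀ s : Finset V, (∃ y, y ∈ s ∧ y ∈ Y) → φ s ∈ Y := by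
    refine ⟨fun s => if h : ∃ y, y ∈ s ∧ y ∈ Y then h.choose
      else if h2 : s.Nonempty then h2.choose else v₀, ?_, ?_⟩
    · intro s hs
      by_cases h1 : ∃ y, y ∈ s ∧ y ∈ Y
      · simp only [dif_pos h1]
        exact h1.choose_spec.1
      · simp only [dif_neg h1, dif_pos hs]
        exact hs.choose_spec
    · intro s h
      simp only [dif_pos h]
      exact h.choose_spec.2
  obtain ⟨φ, hφmem, hφY⟩ := hφex
  obtain ⟨E, hE⟩ := CupLS.assemble X Y Z hcover φ hφmem hφY p q
    (CupLS.cEval (p+2) c) (CupLS.cEval (p+1) bY) (CupLS.cEval (q+2) d) (CupLS.cEval (q+1) bZ)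
    (fun l h => CupLS.cEval_of_ne _ _ h) (fun l h => CupLS.cEval_of_ne _ _ h)
    (fun l h => CupLS.cEval_of_ne _ _ h) (fun l h => CupLS.cEval_of_ne _ _ h)
    (CupLS.cocycle_dL X c hc) (CupLS.cocycle_dL X d hd)
    (CupLS.trivial_to_list X Y c bY hbY) (CupLS.trivial_to_list X Z d bZ hbZ)
  apply hcup
  refine ⟨fun gf => E (List.ofFn gf), ?_⟩
  intro f hf _
  have hLlen : (List.ofFn f).length = p+q+3 := List.length_ofFn (f := f)
  have hLne : (List.ofFn f) ≠ [] := CupLS.ne_nil_of_len (by rw [hLlen]; omega)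
  have hLT : (List.ofFn f).toFinset ∈ X.faces := by
    rw [CupLS.toFinset_ofFn]
    exact hf
  have hval := hE (List.ofFn f) hLne hLT hLlen
  rw [CupLS.cup_eq_front_back c d f, hval, CupLS.cobdry_eq_dL]
  rw [CupLS.dL, CupLS.dL]
  apply Finset.sum_congr rfl
  intro i hi
  simp only [Finset.mem_range] at hi
  congr 1
  have hlen' : ((List.ofFn f).eraseIdx i).length = p+q+2 := by
    rw [List.length_eraseIdx, if_pos hi, hLlen]
    omega

  simp only [CupLS.cEval]
  rw [dif_pos hlen']
  exact congrArg E (CupLS.eq_ofFn_get _ hlen')
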